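/- arXiv:1712.03132 — 3 statements merged into one kernel-verified Lean document; each statement's English description precedes it below -/
import Mathlib

section
/- Let f : ℝ → ℝ be continuous and nonvanishing on ℝ, let c ∈ ℝ, and define L : ℝ → ℝ by L(y) = ∫₀^y c / f(τ) dτ. Let x : ℝ → ℝ be differentiable with x'(t) = f(x(t)) for all t. Then for all t, exp(L(x(t))) = exp(L(x(0))) · exp(c·t). In particular the growth or decay of this Koopman observable is governed solely by the sign of the arbitrary constant c and is independent of the vector field f. -/
/-- For a scalar system `ẋ = f x` with `f` continuous and nonvanishing,
the observable `exp(L(x(t)))`, where `L y = ∫₀^y c / f`, evolves exactly as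
`exp(L(x(0))) · exp(c t)`: its growth/decay depends solely on the sign of `c`. -/
theorem koopman_exp_observable_solution (f : ℝ → ℝ) (hf : Continuous f)
    (hf0 : ∀ τ : ℝ, f τ ≠ 0) (c : ℝ) (L : ℝ → ℝ)
    (hL : ∀ y : ℝ, L y = ∫ τ in (0:ℝ)..y, c / f τ)
    (x : ℝ → ℝ) (hx : ∀ t : ℝ, HasDerivAt x (f (x t)) t) :
    ∀ t : ℝ, Real.exp (L (x t)) = Real.exp (L (x 0)) * Real.exp (c * t) := by
  have hg : Continuous fun τ : ℝ => c / f τ := continuous_const.div hf hf0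
  have hLder : ∀ y : ℝ, HasDerivAt L (c / f y) y := by
    intro y
    have : HasDerivAt (fun y : ℝ => ∫ τ in (0:ℝ)..y, c / f τ) (c / f y) y :=
      intervalIntegral.integral_hasDerivAt_right (hg.intervalIntegrable _ _)
        (hg.stronglyMeasurableAtFilter _ _) hg.continuousAt
    exact this.congr_of_eventuallyEq (Filter.Eventually.of_forall fun z => hL z)
  have hF : ∀ t : ℝ, HasDerivAt (fun t => L (x t) - c * t) 0 t := by
    intro t
    have h1 : HasDerivAt (fun t => L (x t)) (c / f (x t) * f (x t)) t :=
      (hLder (x t)).comp t (hx t)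
    have h2 : HasDerivAt (fun t : ℝ => c * t) c t := by
      simpa using (hasDerivAt_id t).const_mul c
    have := h1.sub h2
    rw [div_mul_cancel₀ _ (hf0 (x t))] at this
    simp only [sub_self] at this
    exact this
  have hconst : ∀ t : ℝ, L (x t) - c * t = L (x 0) - c * 0 := by
    intro t
    have : (fun t => L (x t) - c * t) t = (fun t => L (x t) - c * t) 0 :=
      is_const_of_deriv_eq_zero (fun s => (hF s).differentiableAt)
        (fun s => (hF s).deriv) t 0
    simpa using this
  intro t
  have h := hconst t
  rw [← Real.exp_add]
  congr 1
  linarith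
end

section
/- Fix α ∈ ℝ, n ∈ ℕ, a center vector v ∈ ℝⁿ, and let f : ℝⁿ → ℝⁿ be continuous. Let x : ℝ → ℝⁿ be differentiable with x'(t) = f(x(t)) for all t. Then t ↦ Λ^α_v(x(t)) is differentiable and d/dt Λ^α_v(x(t)) = Σ_{i=1}^n α · (1 − λ_{α,v_i}(x_i(t))) · Λ^α_v(x(t)) · f_i(x(t)). -/
/-- The logistic function with steepness `α` and center `μ`. -/
noncomputable def logistic (α μ x : ℝ) : ℝ := 1 / (1 + Real.exp (-α * (x - μ)))

/-- The multivariate conjunctive logistic function with center vector `v`. -/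
noncomputable def mvLogistic {n : ℕ} (α : ℝ) (v x : Fin n → ℝ) : ℝ :=
  ∏ i, logistic α (v i) (x i)

lemma logistic_pos (α μ y : ℝ) : 0 < logistic α μ y := by
  unfold logistic
  positivity

lemma hasDerivAt_logistic (α μ y : ℝ) :
    HasDerivAt (logistic α μ) (α * logistic α μ y * (1 - logistic α μ y)) y := by
  have hd : (1 : ℝ) + Real.exp (-α * (y - μ)) ≠ 0 := by positivity
  have h1 : HasDerivAt (fun z : ℝ => -α * (z - μ)) (-α) y := by
    simpa using ((hasDerivAt_id y).sub_const μ).const_mul (-α)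
  have h2 : HasDerivAt (fun z : ℝ => 1 + Real.exp (-α * (z - μ)))
      (Real.exp (-α * (y - μ)) * (-α)) y :=
    ((Real.hasDerivAt_exp _).comp y h1).const_add 1
  have h3 := h2.inv hd
  have heq : -(Real.exp (-α * (y - μ)) * (-α)) / (1 + Real.exp (-α * (y - μ))) ^ 2
      = α * logistic α μ y * (1 - logistic α μ y) := by
    unfold logistic
    field_simp
    ring
  rw [heq] at h3
  nth_rw 1 [show logistic α μ = (fun z : ℝ => 1 + Real.exp (-α * (z - μ)))⁻¹ from ?_]
  · exact h3
  funext z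
  simp only [logistic, one_div, Pi.inv_apply]

/-- Along a trajectory of `ẋ = f(x)`, the conjunctive logistic observable
`Λ^α_v(x(t))` is differentiable with
`d/dt Λ^α_v(x(t)) = Σᵢ α (1 - λ_{α,vᵢ}(xᵢ(t))) Λ^α_v(x(t)) fᵢ(x(t))`. -/
theorem mvLogistic_deriv_along_flow {n : ℕ} (α : ℝ) (v : Fin n → ℝ)
    (f : (Fin n → ℝ) → (Fin n → ℝ)) (hf : Continuous f)
    (x : ℝ → (Fin n → ℝ)) (hx : ∀ t : ℝ, HasDerivAt x (f (x t)) t) :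
    ∀ t : ℝ, HasDerivAt (fun s => mvLogistic α v (x s))
      (∑ i, α * (1 - logistic α (v i) (x t i)) * mvLogistic α v (x t) * f (x t) i) t := by
  intro t
  have hxi : ∀ i, HasDerivAt (fun s => x s i) (f (x t) i) t :=
    fun i => hasDerivAt_pi.1 (hx t) i
  have hli : ∀ i : Fin n, HasDerivAt (fun s => logistic α (v i) (x s i))
      (α * logistic α (v i) (x t i) * (1 - logistic α (v i) (x t i)) * f (x t) i) t :=
    fun i => (hasDerivAt_logistic α (v i) (x t i)).comp (h := fun s => x s i) t (hxi i)
  have h := HasDerivAt.fun_finsetProd (u := Finset.univ)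
    (f := fun i s => logistic α (v i) (x s i))
    (f' := fun i => α * logistic α (v i) (x t i) * (1 - logistic α (v i) (x t i)) * f (x t) i)
    (fun i _ => hli i)
  have heq : ∀ i : Fin n,
      (∏ j ∈ Finset.univ.erase i, logistic α (v j) (x t j)) •
        (α * logistic α (v i) (x t i) * (1 - logistic α (v i) (x t i)) * f (x t) i)
      = α * (1 - logistic α (v i) (x t i)) * mvLogistic α v (x t) * f (x t) i := by
    intro i
    have : mvLogistic α v (x t)
        = (∏ j ∈ Finset.univ.erase i, logistic α (v j) (x t j)) * logistic α (v i) (x t i) := by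
      rw [mvLogistic, Finset.prod_erase_mul _ _ (Finset.mem_univ i)]
    rw [this, smul_eq_mul]
    ring
  simp only [heq] at h
  exact h
end

section
/- Fix α ∈ ℝ, n, N ∈ ℕ, center vectors v^1,…,v^N ∈ ℝⁿ, and weights w ∈ ℝ^{n×N}. Let x : ℝ → ℝⁿ be differentiable and suppose each coordinate satisfies x_i'(t) = Σ_{k=1}^N w_{ik} Λ^α_{v^k}(x(t)) for all t. Then for every l ∈ {1,…,N}, d/dt Λ^α_{v^l}(x(t)) = Σ_{i=1}^n Σ_{k=1}^N α · (1 − λ_{α,v^l_i}(x_i(t))) · w_{ik} · Λ^α_{v^l}(x(t)) · Λ^α_{v^k}(x(t)). -/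
lemma one_add_exp_pos (y : ℝ) : 0 < 1 + Real.exp y := by positivity

lemma logistic_hasDerivAt (α μ y : ℝ) :
    HasDerivAt (logistic α μ) (α * (1 - logistic α μ y) * logistic α μ y) y := by
  have h1 : HasDerivAt (fun x : ℝ => -α * (x - μ)) (-α) y := by
    simpa using ((hasDerivAt_id y).sub_const μ).const_mul (-α)
  have h2 : HasDerivAt (fun x : ℝ => 1 + Real.exp (-α * (x - μ)))
      (Real.exp (-α * (y - μ)) * (-α)) y := by
    simpa using (h1.exp.const_add 1)
  have hne : (1 + Real.exp (-α * (y - μ))) ≠ 0 := (one_add_exp_pos _).ne'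
  have h3 := h2.inv hne
  have h4 : HasDerivAt (fun z : ℝ => (1 + Real.exp (-α * (z - μ)))⁻¹)
      (-(Real.exp (-α * (y - μ)) * (-α)) / (1 + Real.exp (-α * (y - μ)))^2) y := h3
  have hlog : logistic α μ = fun z : ℝ => (1 + Real.exp (-α * (z - μ)))⁻¹ := by
    funext z; simp [logistic, one_div]
  have h5 : HasDerivAt (logistic α μ)
      (-(Real.exp (-α * (y - μ)) * (-α)) / (1 + Real.exp (-α * (y - μ)))^2) y := by
    rw [hlog]; exact h4
  convert h5 using 1
  simp only [logistic]
  field_simp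
  ring

/-- If each coordinate of the state satisfies
`ẋᵢ = Σₖ w_{ik} Λ^α_{vᵏ}(x)`, then for every dictionary index `l`,
`d/dt Λ^α_{vˡ}(x(t)) = Σᵢ Σₖ α (1 - λ_{α,vˡᵢ}(xᵢ(t))) w_{ik} Λ^α_{vˡ}(x(t)) Λ^α_{vᵏ}(x(t))`. -/
theorem mvLogistic_deriv_sill {n N : ℕ} (α : ℝ) (v : Fin N → Fin n → ℝ)
    (w : Fin n → Fin N → ℝ) (x : ℝ → (Fin n → ℝ)) (hdiff : Differentiable ℝ x)
    (hx : ∀ (t : ℝ) (i : Fin n),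
      HasDerivAt (fun s => x s i) (∑ k, w i k * mvLogistic α (v k) (x t)) t) :
    ∀ (l : Fin N) (t : ℝ), HasDerivAt (fun s => mvLogistic α (v l) (x s))
      (∑ i, ∑ k, α * (1 - logistic α (v l i) (x t i)) * w i k
        * mvLogistic α (v l) (x t) * mvLogistic α (v k) (x t)) t := by
  intro l t
  have hfac : ∀ i : Fin n, HasDerivAt (fun s => logistic α (v l i) (x s i))
      (α * (1 - logistic α (v l i) (x t i)) * logistic α (v l i) (x t i)
        * (∑ k, w i k * mvLogistic α (v k) (x t))) t :=
    fun i => HasDerivAt.comp (h₂ := logistic α (v l i)) (h := fun s => x s i) t (logistic_hasDerivAt α (v l i) (x t i)) (hx t i)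
  have h := HasDerivAt.fun_finsetProd (u := Finset.univ)
    (f := fun i s => logistic α (v l i) (x s i))
    (f' := fun i => α * (1 - logistic α (v l i) (x t i)) * logistic α (v l i) (x t i)
        * (∑ k, w i k * mvLogistic α (v k) (x t)))
    (fun i _ => hfac i)
  have heq : ∀ i : Fin n,
      (∏ j ∈ Finset.univ.erase i, logistic α (v l j) (x t j)) •
        (α * (1 - logistic α (v l i) (x t i)) * logistic α (v l i) (x t i)
          * (∑ k, w i k * mvLogistic α (v k) (x t)))
      = ∑ k, α * (1 - logistic α (v l i) (x t i)) * w i k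
          * mvLogistic α (v l) (x t) * mvLogistic α (v k) (x t) := by
    intro i
    have hprod : logistic α (v l i) (x t i) *
        ∏ j ∈ Finset.univ.erase i, logistic α (v l j) (x t j)
        = mvLogistic α (v l) (x t) := by
      rw [mvLogistic]; exact Finset.mul_prod_erase Finset.univ (fun j => logistic α (v l j) (x t j)) (Finset.mem_univ i)
    rw [smul_eq_mul, Finset.mul_sum, Finset.mul_sum]
    refine Finset.sum_congr rfl fun k _ => ?_
    rw [← hprod]; ring
  refine h.congr_deriv (Eq.symm ?_)
  exact Finset.sum_congr rfl fun i _ => (heq i).symm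
end
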